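/- Let f be a real polynomial of degree d and write its generating series ∑_{k≥0} f(k) t^k = h*(t)/(1-t)^{d+1}, where h*(t) is a polynomial of degree at most d (the h*-polynomial of f). If g(z) = (z^2 + z + c)·f(z) for a real constant c, and the h*-polynomial of f is palindromic of degree at most d (i.e., h*_i = h*_{d-i} for all 0 ≤ i ≤ d), then the h*-polynomial of g, taken with respect to degree d+2, is palindromic (i.e., its coefficients satisfy h*_i = h*_{(d+2)-i}). -/

import Mathlib

open Polynomial

open Finset

lemma coeff_one_sub_X_pow (m j : ℕ) :
    (PowerSeries.coeff j) ((1 - PowerSeries.X) ^ m) = (-1 : ℝ)^j * (m.choose j) := by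
  have h1 : ((1 - X : ℝ[X]) : PowerSeries ℝ) = 1 - PowerSeries.X := by
    simp [Polynomial.coe_sub]
  rw [← h1, ← Polynomial.coe_pow, Polynomial.coeff_coe]
  have h2 : (1 - X : ℝ[X]) = (-1) • (X + C (-1)) := by ring_nf; simp [smul_eq_mul]; ring
  rw [h2, _root_.smul_pow, Polynomial.coeff_smul, coeff_X_add_C_pow]
  rcases le_or_gt j m with hj | hj
  · have : (-1:ℝ)^m = (-1)^(m-j) * (-1)^j := by rw [← pow_add, Nat.sub_add_cancel hj]
    simp [smul_eq_mul, this]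
    have h3 : (-1:ℝ)^(m-j) * (-1)^(m-j) = 1 := by
      rw [← pow_add]; exact Even.neg_one_pow ⟨m-j, rfl⟩
    linear_combination ((m.choose j : ℝ) * (-1:ℝ)^j) * h3
  · simp [Nat.choose_eq_zero_of_lt hj]

lemma L1 (p : Polynomial ℝ) (m i : ℕ) :
    (PowerSeries.coeff i) (PowerSeries.mk (fun k : ℕ => p.eval (k:ℝ)) * (1 - PowerSeries.X) ^ m)
    = ∑ j ∈ range (i+1), (-1:ℝ)^j * (m.choose j) * p.eval (((i - j : ℕ)):ℝ) := by
  rw [PowerSeries.coeff_mul]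
  rw [Finset.Nat.sum_antidiagonal_eq_sum_range_succ (fun a b =>
    (PowerSeries.coeff a) (PowerSeries.mk (fun k : ℕ => p.eval (k:ℝ)))
      * (PowerSeries.coeff b) ((1 - PowerSeries.X) ^ m))]
  rw [← Finset.sum_range_reflect]
  refine Finset.sum_congr rfl fun j hj => ?_
  simp only [Finset.mem_range, Nat.lt_succ_iff] at hj
  rw [PowerSeries.coeff_mk, coeff_one_sub_X_pow]
  have h1 : i + 1 - 1 - j = i - j := by omega
  have h2 : i - (i - j) = j := by omega
  rw [h1, h2]
  ring

lemma natDegree_diff (p : Polynomial ℝ) (n : ℕ) (hp : p.natDegree ≤ n + 1) :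
    (p - p.comp (X - C 1)).natDegree ≤ n := by
  by_cases hp0 : p = 0
  · simp [hp0]
  set q := p.comp (X - C 1) with hq
  have hqdeg : q.natDegree = p.natDegree := by
    rw [hq, natDegree_comp, natDegree_X_sub_C, mul_one]
  by_cases hd0 : p.natDegree = 0
  · obtain ⟨a, rfl⟩ := natDegree_eq_zero.mp hd0
    simp [hq]
  have hq0 : q ≠ 0 := by
    intro h0
    rw [h0] at hqdeg
    simp at hqdeg
    omega
  have hlc : q.leadingCoeff = p.leadingCoeff := by
    rw [hq, leadingCoeff_comp (by rw [natDegree_X_sub_C]; omega)]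
    rw [leadingCoeff_X_sub_C]
    simp
  have hdeg : (p - q).degree < p.degree := by
    apply degree_sub_lt _ hp0 hlc.symm
    rw [degree_eq_natDegree hp0, degree_eq_natDegree hq0, hqdeg]
  by_cases h0 : p - q = 0
  · simp [h0]
  have := natDegree_lt_natDegree h0 hdeg
  omega

lemma sum_shift (F : ℕ → ℝ) (n : ℕ) (hlast : F (n+1) = 0) :
    ∑ k ∈ range (n+1), F (k+1) = ∑ j ∈ range (n+1), F j - F 0 := by
  have e1 : ∑ j ∈ range (n+2), F j = ∑ k ∈ range (n+1), F (k+1) + F 0 :=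
    Finset.sum_range_succ' F (n+1)
  have e2 : ∑ j ∈ range (n+2), F j = ∑ j ∈ range (n+1), F j + F (n+1) :=
    Finset.sum_range_succ F (n+1)
  rw [hlast, add_zero] at e2
  rw [← e2, e1]; ring

lemma L2 (n : ℕ) (p : Polynomial ℝ) (hp : p.natDegree ≤ n) (x : ℝ) :
    ∑ j ∈ range (n+2), (-1:ℝ)^j * ((n+1).choose j) * p.eval (x - j) = 0 := by
  induction n generalizing p x with
  | zero =>
    obtain ⟨a, rfl⟩ := natDegree_eq_zero.mp (Nat.le_zero.mp hp)
    simp [Finset.sum_range_succ]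
  | succ n ih =>
    set q := p - p.comp (X - C 1) with hqdef
    have hqdeg : q.natDegree ≤ n := natDegree_diff p n hp
    set P : ℕ → ℝ := fun j => p.eval (x - j) with hP
    set Q : ℕ → ℝ := fun j => q.eval (x - j) with hQ
    have hPQ : ∀ j : ℕ, Q j = P j - P (j+1) := by
      intro j
      simp only [hP, hQ, hqdef, eval_sub, eval_comp, eval_X, eval_C]
      push_cast
      ring_nf
    have key : ∑ j ∈ range (n+3), (-1:ℝ)^j * ((n+2).choose j) * P j
        = ∑ j ∈ range (n+2), (-1:ℝ)^j * ((n+1).choose j) * Q j := by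
      have expand : ∑ j ∈ range (n+2), (-1:ℝ)^j * ((n+1).choose j) * Q j
          = ∑ j ∈ range (n+2), (-1:ℝ)^j * ((n+1).choose j) * P j
            + ∑ j ∈ range (n+2), (-1:ℝ)^(j+1) * ((n+1).choose j) * P (j+1) := by
        rw [← Finset.sum_add_distrib]
        refine Finset.sum_congr rfl fun j _ => ?_
        rw [hPQ]; ring
      rw [expand]
      rw [Finset.sum_range_succ' (fun j => (-1:ℝ)^j * ((n+2).choose j) * P j) (n+2)]
      have split : ∑ k ∈ range (n+2), (-1:ℝ)^(k+1) * ((n+2).choose (k+1)) * P (k+1)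
          = ∑ k ∈ range (n+2), (-1:ℝ)^(k+1) * ((n+1).choose k) * P (k+1)
            + ∑ k ∈ range (n+2), (-1:ℝ)^(k+1) * ((n+1).choose (k+1)) * P (k+1) := by
        rw [← Finset.sum_add_distrib]
        refine Finset.sum_congr rfl fun k _ => ?_
        rw [Nat.choose_succ_succ]
        push_cast
        ring
      have third : ∑ k ∈ range (n+2), (-1:ℝ)^(k+1) * ((n+1).choose (k+1)) * P (k+1)
          = ∑ j ∈ range (n+2), (-1:ℝ)^j * ((n+1).choose j) * P j
            - (-1:ℝ)^0 * ((n+1).choose 0) * P 0 := by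
        apply sum_shift (fun j => (-1:ℝ)^j * ((n+1).choose j) * P j) (n+1)
        rw [Nat.choose_eq_zero_of_lt (by omega)]
        push_cast
        ring
      rw [split, third]
      simp only [Nat.choose_zero_right, Nat.cast_one, pow_zero]
      ring
    rw [key]
    exact ih q hqdeg x

lemma L1' (p : Polynomial ℝ) (m i : ℕ) :
    (PowerSeries.coeff i) (PowerSeries.mk (fun k : ℕ => p.eval (k:ℝ)) * (1 - PowerSeries.X) ^ m)
    = ∑ j ∈ range (i+1), (-1:ℝ)^j * (m.choose j) * p.eval ((i:ℝ) - j) := by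
  rw [L1]
  refine Finset.sum_congr rfl fun j hj => ?_
  simp only [Finset.mem_range, Nat.lt_succ_iff] at hj
  rw [Nat.cast_sub hj]

lemma VANISH (p : Polynomial ℝ) (n i : ℕ) (hp : p.natDegree ≤ n) (hi : n + 1 ≤ i) :
    (PowerSeries.coeff i) (PowerSeries.mk (fun k : ℕ => p.eval (k:ℝ)) * (1 - PowerSeries.X) ^ (n+1))
    = 0 := by
  rw [L1']
  rw [← Finset.sum_subset (Finset.range_subset_range.mpr (show n+2 ≤ i+1 by omega))
    (fun j _ hj => by
      rw [Nat.choose_eq_zero_of_lt (by simp at hj ⊢; omega)]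
      push_cast; ring)]
  exact L2 n p hp i

lemma REFL (n : ℕ) (p q : Polynomial ℝ) (hp : p.natDegree ≤ n) (hq : q.natDegree ≤ n)
    (hrec : ∀ x : ℝ, q.eval x = (-1:ℝ)^n * p.eval (-1 - x)) (i : ℕ) (hi : i ≤ n) :
    (PowerSeries.coeff i) (PowerSeries.mk (fun k : ℕ => q.eval (k:ℝ)) * (1 - PowerSeries.X)^(n+1))
    = (PowerSeries.coeff (n - i)) (PowerSeries.mk (fun k : ℕ => p.eval (k:ℝ)) * (1 - PowerSeries.X)^(n+1)) := by
  rw [L1', L1']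
  have hfull := L2 n q hq (i : ℝ)
  -- split the full sum
  have hsplit : ∑ j ∈ range (n+2), (-1:ℝ)^j * ((n+1).choose j) * q.eval ((i:ℝ) - j)
      = ∑ j ∈ range (i+1), (-1:ℝ)^j * ((n+1).choose j) * q.eval ((i:ℝ) - j)
        + ∑ j ∈ Finset.Ico (i+1) (n+2), (-1:ℝ)^j * ((n+1).choose j) * q.eval ((i:ℝ) - j) := by
    rw [Finset.range_eq_Ico, Finset.range_eq_Ico]
    exact (Finset.sum_Ico_consecutive (fun j => (-1:ℝ)^j * ((n+1).choose j) * q.eval ((i:ℝ) - j)) (Nat.zero_le (i+1)) (show i+1 ≤ n+2 by omega)).symm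
  have hL : ∑ j ∈ range (i+1), (-1:ℝ)^j * ((n+1).choose j) * q.eval ((i:ℝ) - j)
      = - ∑ j ∈ Finset.Ico (i+1) (n+2), (-1:ℝ)^j * ((n+1).choose j) * q.eval ((i:ℝ) - j) := by
    rw [hsplit] at hfull; linarith
  rw [hL, Finset.sum_Ico_eq_sum_range]
  have hcount : n + 2 - (i + 1) = n - i + 1 := by omega
  rw [hcount]
  rw [← Finset.sum_range_reflect (fun j => (-1:ℝ)^j * ((n+1).choose j) * p.eval (((n-i:ℕ):ℝ) - j)) (n-i+1)]
  rw [← Finset.sum_neg_distrib]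
  refine Finset.sum_congr rfl fun k hk => ?_
  simp only [Finset.mem_range, Nat.lt_succ_iff] at hk
  have e : n - i + 1 - 1 - k = n - i - k := by omega
  rw [e]
  have harg1 : (i:ℝ) - ((i+1+k:ℕ):ℝ) = -1 - k := by push_cast; ring
  have harg2 : ((n-i:ℕ):ℝ) - ((n-i-k:ℕ):ℝ) = k := by
    rw [Nat.cast_sub (by omega : k ≤ n - i), Nat.cast_sub hi]
    ring
  rw [harg1, harg2]
  have hq' : q.eval (-1 - (k:ℝ)) = (-1:ℝ)^n * p.eval (k:ℝ) := by
    rw [hrec (-1 - (k:ℝ))]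
    norm_num
  rw [hq']
  have hc : ((n+1).choose (n-i-k)) = ((n+1).choose (i+1+k)) := by
    rw [← Nat.choose_symm (show i+1+k ≤ n+1 by omega)]
    congr 1
    omega
  rw [hc]
  have hs : (-1:ℝ)^n * (-1) = (-1:ℝ)^(n-i-k) * (-1)^(i+1+k) := by
    rw [← pow_add, ← pow_succ]
    congr 1
    omega
  have hv : (-1:ℝ)^(i+1+k) * (-1)^(i+1+k) = 1 := by
    rw [← pow_add]
    exact Even.neg_one_pow ⟨i+1+k, by ring⟩
  linear_combination ((((n+1).choose (i+1+k) : ℝ)) * p.eval (k:ℝ) * (-1:ℝ)^(i+1+k)) * hs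
    + ((((n+1).choose (i+1+k) : ℝ)) * p.eval (k:ℝ) * (-1:ℝ)^(n-i-k)) * hv

/-- If `f` is a real polynomial of degree `d` whose h*-polynomial (the numerator
`h` in `∑ f(k) tᵏ = h(t)/(1-t)^{d+1}`) is palindromic with respect to `d`, then the
h*-polynomial of `g = (z²+z+c)·f`, taken with respect to degree `d+2`, is palindromic. -/
theorem stmt2 (d : ℕ) (f : Polynomial ℝ) (hdeg : f.natDegree = d) (c : ℝ)
    (h : Polynomial ℝ) (hhdeg : h.natDegree ≤ d)
    (hser : PowerSeries.mk (fun k : ℕ => f.eval (k : ℝ)) * (1 - PowerSeries.X) ^ (d + 1)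
      = (h : PowerSeries ℝ))
    (hpal : ∀ i ≤ d, h.coeff i = h.coeff (d - i))
    (g : Polynomial ℝ) (hg : g = (X ^ 2 + X + C c) * f)
    (H : Polynomial ℝ) (hHdeg : H.natDegree ≤ d + 2)
    (hHser : PowerSeries.mk (fun k : ℕ => g.eval (k : ℝ)) * (1 - PowerSeries.X) ^ (d + 3)
      = (H : PowerSeries ℝ)) :
    ∀ i ≤ d + 2, H.coeff i = H.coeff (d + 2 - i) := by
  have hfdeg : f.natDegree ≤ d := le_of_eq hdeg
  -- the reflected polynomial
  set ft : Polynomial ℝ := C ((-1:ℝ)^d) * f.comp (C (-1) - X) with hft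
  have hfteval : ∀ x : ℝ, ft.eval x = (-1:ℝ)^d * f.eval (-1 - x) := by
    intro x
    simp [hft, eval_comp]
  have hftdeg : ft.natDegree ≤ d := by
    calc ft.natDegree ≤ (f.comp (C (-1) - X)).natDegree := natDegree_C_mul_le _ _
    _ = f.natDegree * (C (-1) - X : ℝ[X]).natDegree := natDegree_comp
    _ ≤ d := by
        have : (C (-1) - X : ℝ[X]).natDegree = 1 := by
          rw [show (C (-1) - X : ℝ[X]) = -(X - C (-1)) by ring, natDegree_neg, natDegree_X_sub_C]
        rw [this, hdeg, mul_one]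
  -- the two power series agree
  have hSeq : PowerSeries.mk (fun k : ℕ => ft.eval (k : ℝ)) * (1 - PowerSeries.X) ^ (d + 1)
      = PowerSeries.mk (fun k : ℕ => f.eval (k : ℝ)) * (1 - PowerSeries.X) ^ (d + 1) := by
    ext i
    rcases le_or_gt i d with hi | hi
    · rw [REFL d f ft hfdeg hftdeg hfteval i hi, hser, Polynomial.coeff_coe,
        Polynomial.coeff_coe]
      have := hpal (d - i) (by omega)
      rw [this, Nat.sub_sub_self hi]
    · rw [VANISH ft d i hftdeg (by omega), VANISH f d i hfdeg (by omega)]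
  have hne : ((1 - PowerSeries.X : PowerSeries ℝ)) ^ (d + 1) ≠ 0 := by
    apply pow_ne_zero
    intro h0
    have := congrArg (PowerSeries.constantCoeff) h0
    simp at this
  have hmk : PowerSeries.mk (fun k : ℕ => ft.eval (k : ℝ))
      = PowerSeries.mk (fun k : ℕ => f.eval (k : ℝ)) := mul_right_cancel₀ hne hSeq
  -- ft = f as polynomials
  have hftf : ft = f := by
    have hroot : ∀ k : ℕ, (ft - f).eval (k : ℝ) = 0 := by
      intro k
      have := congrArg (PowerSeries.coeff k) hmk
      simp only [PowerSeries.coeff_mk] at this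
      simp [this]
    have : ft - f = 0 := by
      apply Polynomial.eq_zero_of_infinite_isRoot
      exact Set.infinite_of_injective_forall_mem (f := (Nat.cast : ℕ → ℝ))
        Nat.cast_injective (fun k => hroot k)
    exact sub_eq_zero.mp this
  -- reciprocity for f
  have frec : ∀ x : ℝ, f.eval x = (-1:ℝ)^d * f.eval (-1 - x) := by
    intro x
    have hx := hfteval x
    rw [hftf] at hx
    exact hx
  -- reciprocity for g
  have grec : ∀ x : ℝ, g.eval x = (-1:ℝ)^(d+2) * g.eval (-1 - x) := by
    intro x
    have heg : g.eval x = (x^2 + x + c) * f.eval x := by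
      simp only [hg, eval_mul, eval_add, eval_pow, eval_X, eval_C]
    have heg' : g.eval (-1 - x) = (x^2 + x + c) * f.eval (-1 - x) := by
      simp only [hg, eval_mul, eval_add, eval_pow, eval_X, eval_C]
      ring
    rw [heg, heg', frec x, pow_succ, pow_succ]
    ring
  have hgdeg : g.natDegree ≤ d + 2 := by
    rw [hg]
    refine le_trans (natDegree_mul_le) ?_
    have h2 : (X^2 + X + C c : ℝ[X]).natDegree ≤ 2 := by
      refine le_trans (natDegree_add_le _ _) ?_
      simp only [max_le_iff]
      constructor
      · refine le_trans (natDegree_add_le _ _) ?_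
        simp [natDegree_X_pow, natDegree_X]
      · simp [natDegree_C]
    omega
  intro i hi
  have e1 : (H.coeff i : ℝ) = (PowerSeries.coeff i) ((H : PowerSeries ℝ)) :=
    (Polynomial.coeff_coe _ _).symm
  have e2 : (H.coeff (d+2-i) : ℝ) = (PowerSeries.coeff (d+2-i)) ((H : PowerSeries ℝ)) :=
    (Polynomial.coeff_coe _ _).symm
  rw [e1, e2, ← hHser]
  have := REFL (d+2) g g hgdeg hgdeg grec i hi
  rw [show d + 3 = d + 2 + 1 from rfl]
  exact this
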